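/- arXiv:2407.18685 — 4 statements merged into one kernel-verified Lean document; each statement's English description precedes it below -/
import Mathlib

section
/- For natural numbers ν > k ≥ 1, the ratio (ν-k)!/ν! is at most ν^{-k} · exp(k²/ν + 1/(12(ν-k))). -/
open Finset Real

lemma fact_prod_aux (m : ℕ) : ∀ ν, m ≤ ν →
    (ν.factorial : ℝ) = m.factorial * ∏ j ∈ Finset.Ico m ν, ((j : ℝ) + 1) := by
  intro ν hν
  induction ν, hν using Nat.le_induction with
  | base => simp
  | succ n hn ih =>
      rw [Finset.prod_Ico_succ_top (by omega), ← mul_assoc, ← ih, Nat.factorial_succ]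
      push_cast; ring

lemma sum_log_aux (m : ℕ) (hm : 1 ≤ m) : ∀ ν, m ≤ ν →
    (ν : ℝ) * Real.log ν - m * Real.log m - ((ν : ℝ) - m) ≤
      ∑ j ∈ Finset.Ico m ν, Real.log ((j : ℝ) + 1) := by
  intro ν hν
  induction ν, hν using Nat.le_induction with
  | base => simp
  | succ n hn ih =>
      rw [Finset.sum_Ico_succ_top (by omega)]
      have hn1 : (1 : ℝ) ≤ n := by exact_mod_cast hm.trans hn
      have hnpos : (0 : ℝ) < n := by linarith
      -- key step : n * (log (n+1) - log n) ≤ 1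
      have hlog : Real.log ((n : ℝ) + 1) - Real.log n ≤ 1 / n := by
        have h1 : Real.log (((n : ℝ) + 1) / n) ≤ ((n : ℝ) + 1) / n - 1 :=
          Real.log_le_sub_one_of_pos (by positivity)
        rw [Real.log_div (by linarith) (by linarith)] at h1
        have : ((n : ℝ) + 1) / n - 1 = 1 / n := by field_simp; ring
        linarith [this ▸ h1]
      have hkey : (n : ℝ) * Real.log ((n : ℝ) + 1) - 1 ≤ (n : ℝ) * Real.log n := by
        have := mul_le_mul_of_nonneg_left hlog (le_of_lt hnpos)
        rw [mul_div_cancel₀ 1 (ne_of_gt hnpos)] at this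
        nlinarith
      push_cast
      nlinarith [ih]

theorem factorial_ratio_le (ν k : ℕ) (hk : 1 ≤ k) (hkν : k < ν) :
    ((ν - k).factorial : ℝ) / (ν.factorial : ℝ) ≤
      (ν : ℝ) ^ (-(k : ℝ)) *
        Real.exp ((k : ℝ) ^ 2 / (ν : ℝ) + 1 / (12 * ((ν : ℝ) - (k : ℝ)))) := by
  set m := ν - k with hmdef
  have hm1 : 1 ≤ m := by omega
  have hmν : m ≤ ν := by omega
  have hνk : ν = m + k := by omega
  have hcast : ((ν : ℝ) - k) = (m : ℝ) := by
    rw [hmdef]; push_cast [Nat.cast_sub hkν.le]; ring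
  have hνpos : (0 : ℝ) < ν := by exact_mod_cast (by omega : 0 < ν)
  have hmpos : (0 : ℝ) < m := by exact_mod_cast hm1
  have hkpos : (0 : ℝ) < k := by exact_mod_cast hk
  -- main inequality: ν^k * exp(-(k^2/ν)) ≤ ν!/m!
  have hprod := fact_prod_aux m ν hmν
  have hsum := sum_log_aux m hm1 ν hmν
  -- log(m/ν) ≤ -k/ν
  have hlogm : (m : ℝ) * Real.log m ≤ (m : ℝ) * Real.log ν - (k : ℝ) * m / ν := by
    have h1 : Real.log ((m : ℝ) / ν) ≤ (m : ℝ) / ν - 1 :=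
      Real.log_le_sub_one_of_pos (by positivity)
    rw [Real.log_div (ne_of_gt hmpos) (ne_of_gt hνpos)] at h1
    have h2 : (m : ℝ) / ν - 1 = -(k : ℝ) / ν := by
      field_simp
      rw [hνk]; push_cast; ring
    rw [h2] at h1
    have h3 := mul_le_mul_of_nonneg_left h1 hmpos.le
    have : (m : ℝ) * (-(k : ℝ) / ν) = -((k : ℝ) * m / ν) := by ring
    nlinarith
  -- k log ν - k²/ν ≤ ∑ log
  have hchain : (k : ℝ) * Real.log ν - (k : ℝ) ^ 2 / ν ≤
      ∑ j ∈ Finset.Ico m ν, Real.log ((j : ℝ) + 1) := by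
    have hνm : (ν : ℝ) - m = k := by rw [hνk]; push_cast; ring
    have hk2 : (k : ℝ) * m / ν = (k : ℝ) - (k : ℝ) ^ 2 / ν := by
      field_simp; rw [hνk]; push_cast; ring
    have hx : (ν : ℝ) * Real.log ν = (m : ℝ) * Real.log ν + (k : ℝ) * Real.log ν := by
      have hνr : (ν : ℝ) = (m : ℝ) + k := by rw [hνk]; push_cast; ring
      rw [hνr]; ring
    linarith [hsum, hlogm]
  -- exponentiate
  have hexp : (ν : ℝ) ^ k * Real.exp (-((k : ℝ) ^ 2 / ν)) ≤
      (ν.factorial : ℝ) / (m.factorial : ℝ) := by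
    have hfm : (0 : ℝ) < m.factorial := by exact_mod_cast m.factorial_pos
    have hprodpos : (0 : ℝ) < ∏ j ∈ Finset.Ico m ν, ((j : ℝ) + 1) := by
      apply Finset.prod_pos; intro j hj; positivity
    have hlogprod : ∑ j ∈ Finset.Ico m ν, Real.log ((j : ℝ) + 1) =
        Real.log (∏ j ∈ Finset.Ico m ν, ((j : ℝ) + 1)) := by
      rw [Real.log_prod]
      intro j hj; positivity
    have h1 : Real.exp ((k : ℝ) * Real.log ν - (k : ℝ) ^ 2 / ν) ≤
        ∏ j ∈ Finset.Ico m ν, ((j : ℝ) + 1) := by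
      calc Real.exp ((k : ℝ) * Real.log ν - (k : ℝ) ^ 2 / ν)
          ≤ Real.exp (∑ j ∈ Finset.Ico m ν, Real.log ((j : ℝ) + 1)) :=
            Real.exp_le_exp.mpr hchain
        _ = ∏ j ∈ Finset.Ico m ν, ((j : ℝ) + 1) := by
            rw [hlogprod, Real.exp_log hprodpos]
    have h2 : Real.exp ((k : ℝ) * Real.log ν - (k : ℝ) ^ 2 / ν) =
        (ν : ℝ) ^ k * Real.exp (-((k : ℝ) ^ 2 / ν)) := by
      rw [Real.exp_sub, Real.exp_nat_mul, Real.exp_log hνpos, div_eq_mul_inv,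
        ← Real.exp_neg]
    have h3 : (ν.factorial : ℝ) / (m.factorial : ℝ) =
        ∏ j ∈ Finset.Ico m ν, ((j : ℝ) + 1) := by
      rw [hprod]; field_simp
    rw [h3, ← h2]; exact h1
  -- conclude
  rw [hcast]
  have hrpow : (ν : ℝ) ^ (-(k : ℝ)) = ((ν : ℝ) ^ k)⁻¹ := by
    rw [Real.rpow_neg hνpos.le, Real.rpow_natCast]
  rw [hrpow]
  have hfν : (0 : ℝ) < ν.factorial := by exact_mod_cast ν.factorial_pos
  have hfm : (0 : ℝ) < m.factorial := by exact_mod_cast m.factorial_pos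
  have hpk : (0 : ℝ) < (ν : ℝ) ^ k := by positivity
  have hδ : (0 : ℝ) < 1 / (12 * (m : ℝ)) := by positivity
  have hmono : Real.exp ((k : ℝ) ^ 2 / ν) ≤
      Real.exp ((k : ℝ) ^ 2 / ν + 1 / (12 * (m : ℝ))) :=
    Real.exp_le_exp.mpr (by linarith)
  have hstep : (m.factorial : ℝ) / (ν.factorial : ℝ) ≤
      ((ν : ℝ) ^ k)⁻¹ * Real.exp ((k : ℝ) ^ 2 / ν) := by
    rw [div_le_iff₀ hfν]
    have h3 : (ν : ℝ) ^ k * Real.exp (-((k : ℝ) ^ 2 / ν)) * m.factorial ≤ ν.factorial := by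
      have := mul_le_mul_of_nonneg_right hexp hfm.le
      rw [div_mul_cancel₀ _ (ne_of_gt hfm)] at this
      exact this
    have h4 := mul_le_mul_of_nonneg_right h3
      (mul_nonneg (Real.exp_pos ((k : ℝ) ^ 2 / ν)).le (inv_nonneg.mpr hpk.le))
    have h5 : (ν : ℝ) ^ k * Real.exp (-((k : ℝ) ^ 2 / ν)) * m.factorial *
        (Real.exp ((k : ℝ) ^ 2 / ν) * ((ν : ℝ) ^ k)⁻¹) =
        (m.factorial : ℝ) * (Real.exp (-((k : ℝ) ^ 2 / ν)) * Real.exp ((k : ℝ) ^ 2 / ν)) *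
          ((ν : ℝ) ^ k * ((ν : ℝ) ^ k)⁻¹) := by ring
    have hEeq : Real.exp (-((k : ℝ) ^ 2 / ν)) * Real.exp ((k : ℝ) ^ 2 / ν) = 1 := by
      rw [← Real.exp_add]; simp
    rw [h5, hEeq, mul_inv_cancel₀ (ne_of_gt hpk), mul_one, mul_one] at h4
    calc (m.factorial : ℝ)
        ≤ (ν.factorial : ℝ) * (Real.exp ((k : ℝ) ^ 2 / ν) * ((ν : ℝ) ^ k)⁻¹) := h4
      _ = ((ν : ℝ) ^ k)⁻¹ * Real.exp ((k : ℝ) ^ 2 / ν) * ν.factorial := by ring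
  calc (m.factorial : ℝ) / (ν.factorial : ℝ)
      ≤ ((ν : ℝ) ^ k)⁻¹ * Real.exp ((k : ℝ) ^ 2 / ν) := hstep
    _ ≤ ((ν : ℝ) ^ k)⁻¹ * Real.exp ((k : ℝ) ^ 2 / ν + 1 / (12 * (m : ℝ))) := by
        apply mul_le_mul_of_nonneg_left hmono (by positivity)
end

section
/- For every integer m ≥ 1, reals δ₀, δ₁ > -m, integers 3 ≤ τ' < k, the product over i = 1 to m of S_{k,i-1}(δ₁)/S_{k,i-1}(δ₀) lies between e^{-6m/τ'}·((2m+δ₁)/(2m+δ₀))^m and e^{6m/τ'}·((2m+δ₁)/(2m+δ₀))^m. -/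
open Finset

/-- `S_{k,j}(δ) = (2m+δ)k - 2m + j`. -/
noncomputable def Spa (m k j : ℕ) (δ : ℝ) : ℝ :=
  (2 * m + δ) * k - 2 * m + j

theorem prod_S_ratio_single_bounds (m : ℕ) (hm : 1 ≤ m) (δ₀ δ₁ : ℝ)
    (hδ₀ : -(m : ℝ) < δ₀) (hδ₁ : -(m : ℝ) < δ₁)
    (τ' k : ℕ) (hτ' : 3 ≤ τ') (hτ'k : τ' < k) :
    Real.exp (-(6 * m : ℝ) / τ') * ((2 * m + δ₁) / (2 * m + δ₀)) ^ m ≤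
      (∏ i ∈ Finset.Icc 1 m, Spa m k (i - 1) δ₁ / Spa m k (i - 1) δ₀) ∧
    (∏ i ∈ Finset.Icc 1 m, Spa m k (i - 1) δ₁ / Spa m k (i - 1) δ₀) ≤
      Real.exp ((6 * m : ℝ) / τ') * ((2 * m + δ₁) / (2 * m + δ₀)) ^ m := by
  have hmR : (1:ℝ) ≤ m := by exact_mod_cast hm
  have htR : (3:ℝ) ≤ (τ':ℝ) := by exact_mod_cast hτ'
  have htpos : (0:ℝ) < (τ':ℝ) := by linarith
  have hktR : (τ':ℝ) + 1 ≤ (k:ℝ) := by exact_mod_cast hτ'k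
  have hkR : (4:ℝ) ≤ (k:ℝ) := by linarith
  set A : ℝ := 2*(m:ℝ) + δ₁ with hAdef
  set B : ℝ := 2*(m:ℝ) + δ₀ with hBdef
  have hA : (m:ℝ) < A := by rw [hAdef]; linarith
  have hB : (m:ℝ) < B := by rw [hBdef]; linarith
  have hApos : (0:ℝ) < A := by linarith
  have hBpos : (0:ℝ) < B := by linarith
  set E : ℝ := Real.exp (6/(τ':ℝ)) with hEdef
  have hEpos : 0 < E := Real.exp_pos _
  have hEt : (τ':ℝ) + 6 ≤ τ' * E := by
    have h := Real.add_one_le_exp (6/(τ':ℝ))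
    have h2 : (6/(τ':ℝ)) * τ' = 6 := div_mul_cancel₀ _ (ne_of_gt htpos)
    nlinarith [mul_le_mul_of_nonneg_right h htpos.le]
  have hkE : (k:ℝ) ≤ ((k:ℝ) - 2) * E := by
    have h1 : (k:ℝ) * τ' ≤ ((k:ℝ) - 2) * ((τ':ℝ) + 6) := by nlinarith
    have h2 : ((k:ℝ) - 2) * ((τ':ℝ) + 6) ≤ ((k:ℝ) - 2) * (τ' * E) :=
      mul_le_mul_of_nonneg_left hEt (by linarith)
    have h3 : (τ':ℝ) * k ≤ τ' * (((k:ℝ) - 2) * E) := by nlinarith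
    exact le_of_mul_le_mul_left h3 htpos
  have key : ∀ i ∈ Icc 1 m,
      E⁻¹ * (A/B) ≤ Spa m k (i-1) δ₁ / Spa m k (i-1) δ₀ ∧
      Spa m k (i-1) δ₁ / Spa m k (i-1) δ₀ ≤ E * (A/B) := by
    intro i hi
    simp only [mem_Icc] at hi
    have hiR : (1:ℝ) ≤ i := by exact_mod_cast hi.1
    have himR : (i:ℝ) ≤ m := by exact_mod_cast hi.2
    have hcast : ((i-1:ℕ):ℝ) = (i:ℝ) - 1 := by
      push_cast [Nat.cast_sub hi.1]; ring
    set c : ℝ := 2*(m:ℝ) - ((i:ℝ) - 1) with hcdef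
    have hSpa1 : Spa m k (i-1) δ₁ = A*k - c := by
      simp only [Spa, hcast, hAdef, hcdef]; ring
    have hSpa0 : Spa m k (i-1) δ₀ = B*k - c := by
      simp only [Spa, hcast, hBdef, hcdef]; ring
    have hc2 : c ≤ 2*(m:ℝ) := by rw [hcdef]; linarith
    have hc1 : (1:ℝ) ≤ c := by rw [hcdef]; linarith
    have hcB : c ≤ 2*B := by linarith
    have hcA : c ≤ 2*A := by linarith
    have hB4 : B*4 ≤ B*k := mul_le_mul_of_nonneg_left hkR hBpos.le
    have hA4 : A*4 ≤ A*k := mul_le_mul_of_nonneg_left hkR hApos.le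
    have hBk : B*((k:ℝ)-2) ≤ B*k - c := by linarith [mul_sub B (k:ℝ) 2]
    have hAk : A*((k:ℝ)-2) ≤ A*k - c := by linarith [mul_sub A (k:ℝ) 2]
    have hBkpos : (0:ℝ) < B*k - c := by linarith
    have hAkpos : (0:ℝ) < A*k - c := by linarith
    rw [hSpa1, hSpa0]
    constructor
    · rw [inv_mul_eq_div, div_div, div_le_div_iff₀ (by positivity) hBkpos]
      -- A * (B*k - c) ≤ (A*k - c) * (B * E)
      have h1 : A*B*(k:ℝ) ≤ A*B*(((k:ℝ)-2)*E) :=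
        mul_le_mul_of_nonneg_left hkE (by positivity)
      have h2 : (A*((k:ℝ)-2)) * (B*E) ≤ (A*k - c) * (B*E) :=
        mul_le_mul_of_nonneg_right hAk (by positivity)
      linarith [h1, h2, mul_nonneg hApos.le (le_trans zero_le_one hc1)]
    · rw [div_le_iff₀ hBkpos, mul_comm E (A/B), mul_assoc, div_mul_eq_mul_div, le_div_iff₀ hBpos]
      -- (A*k - c) * B ≤ A * (E * (B*k - c))
      have h1 : A*B*(k:ℝ) ≤ A*B*(((k:ℝ)-2)*E) :=
        mul_le_mul_of_nonneg_left hkE (by positivity)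
      have h2 : (B*((k:ℝ)-2)) * (A*E) ≤ (B*k - c) * (A*E) :=
        mul_le_mul_of_nonneg_right hBk (by positivity)
      linarith [h1, h2, mul_nonneg hBpos.le (le_trans zero_le_one hc1)]
  have hcard : (Icc 1 m).card = m := by simp
  have hnonneg : ∀ i ∈ Icc 1 m, (0:ℝ) ≤ Spa m k (i-1) δ₁ / Spa m k (i-1) δ₀ := by
    intro i hi
    exact le_trans (by positivity) (key i hi).1
  constructor
  · calc Real.exp (-(6*m:ℝ)/τ') * (A/B)^m
        = (E⁻¹ * (A/B))^m := by
          rw [mul_pow, ← Real.exp_neg, ← Real.exp_nat_mul]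
          congr 2
          ring
      _ = ∏ _i ∈ Icc 1 m, E⁻¹ * (A/B) := by rw [prod_const, hcard]
      _ ≤ ∏ i ∈ Icc 1 m, Spa m k (i-1) δ₁ / Spa m k (i-1) δ₀ :=
          Finset.prod_le_prod (fun i _ => by positivity) (fun i hi => (key i hi).1)
  · calc (∏ i ∈ Icc 1 m, Spa m k (i-1) δ₁ / Spa m k (i-1) δ₀)
        ≤ ∏ _i ∈ Icc 1 m, E * (A/B) :=
          Finset.prod_le_prod hnonneg (fun i hi => (key i hi).2)
      _ = (E * (A/B))^m := by rw [prod_const, hcard]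
      _ = Real.exp ((6*m:ℝ)/τ') * (A/B)^m := by
          rw [mul_pow, ← Real.exp_nat_mul]
          congr 2
          ring
end

section
/- The function x ↦ x·log(1 + c/x) is strictly concave on (0, ∞) for every nonzero real c with c > -x for all relevant x (i.e., on the domain where 1 + c/x > 0). -/
open Real Set Filter

theorem strictConcaveOn_mul_log_one_add_div (c : ℝ) (hc : c ≠ 0) :
    StrictConcaveOn ℝ {x : ℝ | 0 < x ∧ 0 < x + c}
      (fun x => x * Real.log (1 + c / x)) := by
  set S : Set ℝ := {x : ℝ | 0 < x ∧ 0 < x + c} with hS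
  have hSeq : S = Ioi (max 0 (-c)) := by
    ext x
    simp only [hS, Set.mem_setOf_eq, Set.mem_Ioi, max_lt_iff]
    constructor
    · rintro ⟨hx, hxc⟩; exact ⟨hx, by linarith⟩
    · rintro ⟨hx, hxc⟩; exact ⟨hx, by linarith⟩
  have hopen : IsOpen S := hSeq ▸ isOpen_Ioi
  have hconv : Convex ℝ S := hSeq ▸ convex_Ioi _
  set f : ℝ → ℝ := fun x => x * Real.log (1 + c / x) with hf
  set g : ℝ → ℝ := fun x => x * (Real.log (x + c) - Real.log x) with hg
  have hfg : ∀ x ∈ S, f x = g x := by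
    rintro x ⟨hx, hxc⟩
    have h1 : 1 + c / x = (x + c) / x := by field_simp
    simp only [hf, hg, h1, Real.log_div hxc.ne' hx.ne']
  set g' : ℝ → ℝ := fun x => Real.log (x + c) - Real.log x - c / (x + c) with hg'
  have hd1 : ∀ x ∈ S, HasDerivAt g (g' x) x := by
    rintro x ⟨hx, hxc⟩
    have h1 : HasDerivAt (fun y : ℝ => Real.log (y + c)) (1 / (x + c)) x := by
      have := (Real.hasDerivAt_log hxc.ne').comp x ((hasDerivAt_id x).add_const c)
      simpa [one_div, Function.comp_def] using this
    have h2 : HasDerivAt Real.log (1 / x) x := by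
      simpa [one_div] using Real.hasDerivAt_log hx.ne'
    have := (hasDerivAt_id x).mul (h1.sub h2)
    refine this.congr_deriv ?_
    simp only [hg', id_eq, one_mul, Pi.sub_apply]
    field_simp
    ring
  have hd2 : ∀ x ∈ S, HasDerivAt g' (-c ^ 2 / (x * (x + c) ^ 2)) x := by
    rintro x ⟨hx, hxc⟩
    have h1 : HasDerivAt (fun y : ℝ => Real.log (y + c)) (1 / (x + c)) x := by
      have := (Real.hasDerivAt_log hxc.ne').comp x ((hasDerivAt_id x).add_const c)
      simpa [one_div, Function.comp_def] using this
    have h2 : HasDerivAt Real.log (1 / x) x := by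
      simpa [one_div] using Real.hasDerivAt_log hx.ne'
    have h3 : HasDerivAt (fun y : ℝ => c / (y + c)) (-c / (x + c) ^ 2) x := by
      have := (((hasDerivAt_id x).add_const c).inv hxc.ne').const_mul c
      have h4 : (fun y : ℝ => c / (y + c)) = fun y : ℝ => c * (y + c)⁻¹ := by
        funext y; rw [div_eq_mul_inv]
      rw [h4]
      refine this.congr_deriv ?_
      simp only [id_eq]
      field_simp
    have := (h1.sub h2).sub h3
    refine this.congr_deriv ?_
    field_simp
    ring
  -- transfer derivatives to f
  have hder1 : ∀ x ∈ S, deriv f x = g' x := by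
    intro x hx
    have hev : f =ᶠ[nhds x] g :=
      Filter.eventuallyEq_of_mem (hopen.mem_nhds hx) hfg
    rw [hev.deriv_eq]
    exact (hd1 x hx).deriv
  have hder2 : ∀ x ∈ S, deriv (deriv f) x = -c ^ 2 / (x * (x + c) ^ 2) := by
    intro x hx
    have hev : deriv f =ᶠ[nhds x] g' :=
      Filter.eventuallyEq_of_mem (hopen.mem_nhds hx) hder1
    rw [hev.deriv_eq]
    exact (hd2 x hx).deriv
  have hcont : ContinuousOn f S := by
    apply ContinuousOn.congr _ hfg
    intro x hx
    exact ((hd1 x hx).continuousAt.continuousWithinAt)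
  apply strictConcaveOn_of_deriv2_neg hconv hcont
  intro x hx
  rw [hopen.interior_eq] at hx
  have h2 : deriv^[2] f x = deriv (deriv f) x := by
    simp [Function.iterate_succ, Function.comp_apply]
  rw [h2, hder2 x hx]
  obtain ⟨hx1, hx2⟩ := hx
  apply div_neg_of_neg_of_pos
  · have : (0:ℝ) < c ^ 2 := by positivity
    linarith
  · positivity
end

section
/- Let (P_n), (Q_n) be sequences of probability measures and suppose that for some measurable random variables L_n = dQ_n/dP_n (likelihood ratios), events B_n, and a finite constant M it holds that limsup_n E_{P_n}[L_n² 1_{B_n}] ≤ M and Q_n(B_nᶜ) → 0. Then for any sequence of events A_n with P_n(A_n) → 0, we have Q_n(A_n) → 0; i.e., (Q_n) is contiguous with respect to (P_n). -/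
open MeasureTheory Filter
open scoped ENNReal

/-- Second-moment criterion for contiguity: if the likelihood ratios `L n = dQ_n/dP_n`
have uniformly bounded second moment on events `B n` with `Q n (B n)ᶜ → 0`, then
`(Q n)` is contiguous with respect to `(P n)`. -/
theorem contiguity_of_bounded_second_moment
    {Ω : ℕ → Type*} [∀ n, MeasurableSpace (Ω n)]
    (P Q : ∀ n, Measure (Ω n))
    [∀ n, IsProbabilityMeasure (P n)] [∀ n, IsProbabilityMeasure (Q n)]
    (L : ∀ n, Ω n → ℝ≥0∞) (hLmeas : ∀ n, Measurable (L n))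
    (hL : ∀ n, Q n = (P n).withDensity (L n))
    (B : ∀ n, Set (Ω n)) (hBmeas : ∀ n, MeasurableSet (B n))
    (M : ℝ≥0∞) (hM : M ≠ ⊤)
    (hlim : Filter.limsup (fun n => ∫⁻ ω in B n, (L n ω) ^ 2 ∂(P n)) Filter.atTop ≤ M)
    (hB : Filter.Tendsto (fun n => Q n (B n)ᶜ) Filter.atTop (nhds 0)) :
    ∀ A : (n : ℕ) → Set (Ω n), (∀ n, MeasurableSet (A n)) →
      Filter.Tendsto (fun n => P n (A n)) Filter.atTop (nhds 0) →
      Filter.Tendsto (fun n => Q n (A n)) Filter.atTop (nhds 0) := by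
  intro A hAmeas hA
  -- eventual bound on the second moment
  have hev : ∀ᶠ n in atTop, (∫⁻ ω in B n, (L n ω) ^ 2 ∂(P n)) ≤ M + 1 := by
    have hlt : Filter.limsup (fun n => ∫⁻ ω in B n, (L n ω) ^ 2 ∂(P n)) Filter.atTop
        < M + 1 := lt_of_le_of_lt hlim (ENNReal.lt_add_right hM one_ne_zero)
    exact (Filter.eventually_lt_of_limsup_lt hlt).mono fun n h => h.le
  -- key Cauchy–Schwarz bound
  have key : ∀ n, Q n (A n) ≤ Q n (B n)ᶜ +
      (∫⁻ ω in B n, (L n ω) ^ 2 ∂(P n)) ^ (1/2 : ℝ) * (P n (A n)) ^ (1/2 : ℝ) := by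
    intro n
    have hsplit : Q n (A n) ≤ Q n (B n)ᶜ + Q n (A n ∩ B n) := by
      refine le_trans (measure_mono ?_) (measure_union_le _ _)
      intro x hx
      by_cases hb : x ∈ B n
      · exact Or.inr ⟨hx, hb⟩
      · exact Or.inl hb
    refine hsplit.trans (add_le_add_right ?_ _)
    rw [hL n, withDensity_apply _ ((hAmeas n).inter (hBmeas n))]
    set f : Ω n → ℝ≥0∞ := (B n).indicator (L n) with hf
    set g : Ω n → ℝ≥0∞ := (A n).indicator 1 with hg
    have hconj : Real.HolderConjugate 2 2 := Real.HolderConjugate.two_two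
    have hCS := ENNReal.lintegral_mul_le_Lp_mul_Lq (P n) hconj
      (((hLmeas n).indicator (hBmeas n)).aemeasurable)
      ((measurable_one.indicator (hAmeas n)).aemeasurable)
      (f := f) (g := g)
    have h1 : (∫⁻ a, (f * g) a ∂(P n)) = ∫⁻ ω in A n ∩ B n, L n ω ∂(P n) := by
      rw [← lintegral_indicator ((hAmeas n).inter (hBmeas n)) _]
      congr 1
      funext x
      by_cases ha : x ∈ A n <;> by_cases hb : x ∈ B n <;>
        simp [hf, hg, Set.indicator_apply, ha, hb, Set.mem_inter_iff]
    have h2 : (∫⁻ a, f a ^ (2:ℝ) ∂(P n)) = ∫⁻ ω in B n, (L n ω) ^ 2 ∂(P n) := by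
      rw [← lintegral_indicator (hBmeas n) _]
      congr 1
      funext x
      by_cases hb : x ∈ B n
      · simp only [hf, Set.indicator_of_mem hb]
        rw [← ENNReal.rpow_natCast (L n x) 2]
        norm_num
      · simp [hf, Set.indicator_apply, hb, ENNReal.zero_rpow_of_pos (by norm_num : (0:ℝ) < 2)]
    have h3 : (∫⁻ a, g a ^ (2:ℝ) ∂(P n)) = P n (A n) := by
      have : ∀ x, g x ^ (2:ℝ) = (A n).indicator 1 x := by
        intro x
        by_cases ha : x ∈ A n
        · simp [hg, Set.indicator_apply, ha]
        · simp [hg, Set.indicator_apply, ha,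
            ENNReal.zero_rpow_of_pos (by norm_num : (0:ℝ) < 2)]
      simp only [this]
      rw [lintegral_indicator (hAmeas n) _]
      simp
    rw [h1, h2, h3] at hCS
    exact hCS
  -- the upper bound tends to 0
  have hMtop : M + 1 ≠ ⊤ := by
    simp [ENNReal.add_ne_top, hM]
  have hub : Tendsto (fun n => Q n (B n)ᶜ +
      (M + 1) ^ (1/2 : ℝ) * (P n (A n)) ^ (1/2 : ℝ)) atTop (nhds 0) := by
    have h2 : Tendsto (fun n => (P n (A n)) ^ (1/2 : ℝ)) atTop (nhds 0) := by
      have := (ENNReal.continuous_rpow_const (y := (1/2 : ℝ))).tendsto 0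
      have h0 : (0:ℝ≥0∞) ^ (1/2 : ℝ) = 0 :=
        ENNReal.zero_rpow_of_pos (by norm_num)
      rw [h0] at this
      exact this.comp hA
    have h3 : Tendsto (fun n => (M + 1) ^ (1/2 : ℝ) * (P n (A n)) ^ (1/2 : ℝ))
        atTop (nhds 0) := by
      have := ENNReal.Tendsto.const_mul h2
        (Or.inr (ENNReal.rpow_ne_top_of_nonneg (by norm_num : (0:ℝ) ≤ 1/2) hMtop))
      simpa using this
    simpa using hB.add h3
  -- squeeze
  refine tendsto_of_tendsto_of_tendsto_of_le_of_le' tendsto_const_nhds hub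
    (Eventually.of_forall fun n => zero_le) ?_
  filter_upwards [hev] with n hn
  refine (key n).trans (add_le_add_right ?_ _)
  exact mul_le_mul_left (ENNReal.rpow_le_rpow hn (by norm_num)) _
end
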